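/- Let Ω ⊆ ℂ be open (one complex variable) and let 𝒳 be a Hausdorff topological vector space of holomorphic functions on Ω satisfying (P1)–(P3). A family of polynomials ℱ ⊆ 𝒫_1 is jointly cyclic in 𝒳 if and only if V(ℱ) ∩ Ω_max = ∅, where V(ℱ) = {w ∈ ℂ : P(w) = 0 for all P ∈ ℱ}. -/

import Mathlib

/-!
A Hausdorff topological vector space `X` of holomorphic functions in one complex
variable on an open set `Ω ⊆ ℂ` satisfying (P1) (polynomials are dense), (P2) (point
evaluations at points of `Ω` are continuous) and (P3) (the shift operator, and hence
multiplication by any polynomial, is a continuous linear self map).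
-/
structure HoloFunSpace1 (Ω : Set ℂ) (X : Type*)
    [AddCommGroup X] [Module ℂ X] [TopologicalSpace X] where
  /-- The realization of elements of `X` as (holomorphic) functions on `Ω`. -/
  toFun : X →ₗ[ℂ] (ℂ → ℂ)
  holo : ∀ F : X, DifferentiableOn ℂ (toFun F) Ω
  inj : ∀ F G : X, Set.EqOn (toFun F) (toFun G) Ω → F = G
  /-- The polynomials, as elements of `X`. -/
  poly : Polynomial ℂ →ₗ[ℂ] X
  poly_eval : ∀ (p : Polynomial ℂ), ∀ z ∈ Ω, toFun (poly p) z = Polynomial.eval z p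
  /-- (P1): polynomials are dense in `X`. -/
  dense_poly : Dense (Set.range fun p : Polynomial ℂ => poly p)
  /-- (P2): point evaluations at points of `Ω` are continuous. -/
  eval_cont : ∀ z ∈ Ω, Continuous fun F : X => toFun F z
  /-- Multiplication by a polynomial, a continuous linear self map of `X`;
  (P3) is the special case of the shift `mul X`. -/
  mul : Polynomial ℂ → X →L[ℂ] X
  mul_eval : ∀ (p : Polynomial ℂ) (F : X), ∀ z ∈ Ω,
    toFun (mul p F) z = Polynomial.eval z p * toFun F z

namespace HoloFunSpace1

variable {Ω : Set ℂ} {X : Type*} [AddCommGroup X] [Module ℂ X] [TopologicalSpace X]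

/-- The maximal domain `Ω_max`: all `w ∈ ℂ` such that evaluation at `w`, defined on
polynomials, extends to a continuous linear functional on `X`. -/
def maxDomain (H : HoloFunSpace1 Ω X) : Set ℂ :=
  {w | ∃ Λ : X →L[ℂ] ℂ, ∀ p : Polynomial ℂ, Λ (H.poly p) = Polynomial.eval w p}

/-- The invariant subspace `S[F]`: the closure of `{p · F : p ∈ 𝒫_1}`. -/
def invSub (H : HoloFunSpace1 Ω X) (F : X) : Set X :=
  closure (Set.range fun p : Polynomial ℂ => H.mul p F)

/-- `F` is cyclic if `S[F] = X`. -/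
def Cyclic (H : HoloFunSpace1 Ω X) (F : X) : Prop := H.invSub F = Set.univ

/-- The joint invariant subspace `S[𝓕]`: the closed linear span of `⋃_{F ∈ 𝓕} S[F]`. -/
def jointInvSub (H : HoloFunSpace1 Ω X) (𝓕 : Set X) : Set X :=
  closure (Submodule.span ℂ (⋃ F ∈ 𝓕, H.invSub F) : Set X)

/-- A family `𝓕` is jointly cyclic if `S[𝓕] = X`. -/
def JointlyCyclic (H : HoloFunSpace1 Ω X) (𝓕 : Set X) : Prop :=
  H.jointInvSub 𝓕 = Set.univ

end HoloFunSpace1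

namespace HoloFunSpace1Aux

open HoloFunSpace1 Polynomial

variable {Ω : Set ℂ} {X : Type*} [AddCommGroup X] [Module ℂ X] [TopologicalSpace X]

/-- Multiplication of a polynomial element agrees with polynomial multiplication. -/
theorem mul_poly (H : HoloFunSpace1 Ω X) (p q : Polynomial ℂ) :
    H.mul p (H.poly q) = H.poly (p * q) := by
  apply H.inj
  intro z hz
  rw [H.mul_eval p _ z hz, H.poly_eval q z hz, H.poly_eval _ z hz, Polynomial.eval_mul]

theorem mul_poly_one (H : HoloFunSpace1 Ω X) (p : Polynomial ℂ) :
    H.mul p (H.poly 1) = H.poly p := by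
  rw [mul_poly, mul_one]

theorem mul_mul (H : HoloFunSpace1 Ω X) (p q : Polynomial ℂ) (F : X) :
    H.mul p (H.mul q F) = H.mul (p * q) F := by
  apply H.inj
  intro z hz
  rw [H.mul_eval _ _ z hz, H.mul_eval _ _ z hz, H.mul_eval _ _ z hz, Polynomial.eval_mul,
    mul_assoc]

/-- A generic closure-pushing tool. -/
theorem mem_closure_of_image {Y : Type*} [TopologicalSpace Y] {f : Y → Y} (hf : Continuous f)
    {s t : Set Y} (hst : ∀ y ∈ s, f y ∈ closure t) {x : Y} (hx : x ∈ closure s) :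
    f x ∈ closure t := by
  have h1 : f x ∈ closure (f '' s) :=
    image_closure_subset_closure_image hf (Set.mem_image_of_mem f hx)
  have h2 : closure (f '' s) ⊆ closure t := by
    rw [← closure_closure (s := t)]
    exact closure_mono (by rintro _ ⟨y, hy, rfl⟩; exact hst y hy)
  exact h2 h1

theorem omega_subset_maxDomain (H : HoloFunSpace1 Ω X) : Ω ⊆ H.maxDomain := by
  intro z hz
  refine ⟨⟨{ toFun := fun F => H.toFun F z, map_add' := ?_, map_smul' := ?_ },
    H.eval_cont z hz⟩, fun p => H.poly_eval p z hz⟩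
  · intro F G; simp
  · intro c F; simp

variable [IsTopologicalAddGroup X] [ContinuousSMul ℂ X] [T2Space X]

/-- The key functional-analytic lemma: if `w` is not in the maximal domain, then `1`
belongs to the closed invariant subspace generated by `z - w`. -/
theorem key (H : HoloFunSpace1 Ω X) (w : ℂ) (hw : w ∉ H.maxDomain) :
    H.poly 1 ∈ closure (Set.range fun q : Polynomial ℂ =>
      H.poly ((Polynomial.X - Polynomial.C w) * q)) := by
  by_contra h1
  set g : Polynomial ℂ := Polynomial.X - Polynomial.C w with hgdef
  set N : Submodule ℂ X := LinearMap.range (H.poly ∘ₗ LinearMap.mulLeft ℂ g) with hNdef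
  set M : Submodule ℂ X := N.topologicalClosure with hMdef
  have hNset : (N : Set X) = Set.range fun q : Polynomial ℂ => H.poly (g * q) := by
    ext x
    simp [hNdef, LinearMap.mem_range]
  have hMset : (M : Set X) = closure (Set.range fun q : Polynomial ℂ => H.poly (g * q)) := by
    rw [hMdef, Submodule.topologicalClosure_coe, hNset]
  haveI hMc : IsClosed (M : Set X) := Submodule.isClosed_topologicalClosure N
  set e : X ⧸ M := M.mkQ (H.poly 1) with hedef
  have hmk : ∀ p : Polynomial ℂ, M.mkQ (H.poly p) = (Polynomial.eval w p) • e := by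
    intro p
    have hdvd : g ∣ (p - Polynomial.C (Polynomial.eval w p)) := by
      rw [hgdef, Polynomial.dvd_iff_isRoot]
      simp [Polynomial.IsRoot]
    obtain ⟨q, hq⟩ := hdvd
    have hmem : H.poly p - (Polynomial.eval w p) • H.poly 1 ∈ M := by
      have heq : H.poly p - (Polynomial.eval w p) • H.poly 1 = H.poly (g * q) := by
        rw [← hq, map_sub]
        congr 1
        rw [← map_smul]
        congr 1
        rw [← Polynomial.algebraMap_eq, Algebra.algebraMap_eq_smul_one]
      rw [heq]
      exact N.le_topologicalClosure ⟨q, by simp⟩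
    rw [hedef, ← map_smul, Submodule.mkQ_apply, Submodule.mkQ_apply]
    exact (Submodule.Quotient.eq M).mpr hmem
  have hene : e ≠ 0 := by
    intro h0
    apply h1
    rw [hgdef] at hMset
    rw [← hMset]
    exact (Submodule.Quotient.mk_eq_zero M).mp (by rw [hedef, Submodule.mkQ_apply] at h0; exact h0)
  -- the quotient is spanned by `e`
  have hdense : Dense (M.mkQ '' (Set.range fun p : Polynomial ℂ => H.poly p)) := by
    rw [dense_iff_inter_open]
    rintro U hU ⟨x, hx⟩
    obtain ⟨y, rfl⟩ := Submodule.mkQ_surjective M x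
    obtain ⟨d, hdU, hds⟩ := dense_iff_inter_open.mp H.dense_poly (M.mkQ ⁻¹' U)
      (hU.preimage (continuous_quot_mk)) ⟨y, hx⟩
    exact ⟨M.mkQ d, hdU, Set.mem_image_of_mem _ hds⟩
  haveI : FiniteDimensional ℂ (Submodule.span ℂ ({e} : Set (X ⧸ M))) :=
    FiniteDimensional.span_of_finite ℂ (Set.finite_singleton e)
  have htop : ∀ x : X ⧸ M, x ∈ Submodule.span ℂ ({e} : Set (X ⧸ M)) := by
    intro x
    have hcl : IsClosed ((Submodule.span ℂ ({e} : Set (X ⧸ M))) : Set (X ⧸ M)) :=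
      Submodule.closed_of_finiteDimensional _
    have himg : M.mkQ '' (Set.range fun p : Polynomial ℂ => H.poly p) ⊆
        (Submodule.span ℂ ({e} : Set (X ⧸ M)) : Set (X ⧸ M)) := by
      rintro _ ⟨_, ⟨p, rfl⟩, rfl⟩
      rw [hmk p]
      exact Submodule.smul_mem _ _ (Submodule.mem_span_singleton_self e)
    have := closure_minimal himg hcl
    rw [hdense.closure_eq] at this
    exact this (Set.mem_univ x)
  have hspan : Submodule.span ℂ ({e} : Set (X ⧸ M)) = ⊤ := Submodule.eq_top_iff'.mpr htop
  haveI : FiniteDimensional ℂ (X ⧸ M) := ⟨⟨{e}, by simpa using hspan⟩⟩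
  set leq : (X ⧸ M) ≃ₗ[ℂ] ℂ :=
    ((LinearEquiv.ofTop _ hspan).symm).trans
      ((LinearEquiv.toSpanNonzeroSingleton ℂ (X ⧸ M) e hene).symm) with hleq
  set lcont : (X ⧸ M) →L[ℂ] ℂ := LinearMap.toContinuousLinearMap leq.toLinearMap with hlcont
  set piL : X →L[ℂ] (X ⧸ M) := ⟨M.mkQ, continuous_quot_mk⟩ with hpiL
  have hle : leq e ≠ 0 := by
    rw [Ne, LinearEquiv.map_eq_zero_iff]
    exact hene
  apply hw
  refine ⟨(leq e)⁻¹ • (lcont.comp piL), fun p => ?_⟩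
  have hcalc : (lcont.comp piL) (H.poly p) = (Polynomial.eval w p) * leq e := by
    show leq (M.mkQ (H.poly p)) = _
    rw [hmk p, map_smul, smul_eq_mul]
  rw [ContinuousLinearMap.smul_apply, hcalc, smul_eq_mul]
  field_simp

/-- Induction over the linear factors: if no root of `g` lies in the maximal domain,
then `1` lies in the closed invariant subspace generated by `g`. -/
theorem ind (H : HoloFunSpace1 Ω X) :
    ∀ n : ℕ, ∀ g : Polynomial ℂ, g.natDegree = n → g ≠ 0 →
      (∀ w : ℂ, g.IsRoot w → w ∉ H.maxDomain) →
      H.poly 1 ∈ closure (Set.range fun q : Polynomial ℂ => H.poly (g * q)) := by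
  intro n
  induction n using Nat.strong_induction_on with
  | _ n IH =>
    intro g hdeg hg hroots
    rcases Nat.eq_zero_or_pos n with hn | hn
    · -- constant case
      subst hn
      obtain ⟨c, rfl⟩ := Polynomial.natDegree_eq_zero.mp hdeg
      have hc : c ≠ 0 := by
        intro h; exact hg (by rw [h, map_zero])
      apply subset_closure
      refine ⟨Polynomial.C c⁻¹, ?_⟩
      show H.poly (Polynomial.C c * Polynomial.C c⁻¹) = H.poly 1
      rw [← Polynomial.C_mul, mul_inv_cancel₀ hc, Polynomial.C_1]
    · have hdegpos : 0 < g.degree := by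
        rw [← Polynomial.natDegree_pos_iff_degree_pos, hdeg]
        exact hn
      obtain ⟨w, hwroot⟩ := Complex.exists_root hdegpos
      obtain ⟨g₁, hfac⟩ := Polynomial.dvd_iff_isRoot.mpr hwroot
      have hXC : (Polynomial.X - Polynomial.C w : Polynomial ℂ) ≠ 0 := Polynomial.X_sub_C_ne_zero w
      have hg₁ : g₁ ≠ 0 := by
        intro h; exact hg (by rw [hfac, h, mul_zero])
      have hdeg₁ : g₁.natDegree < n := by
        have := Polynomial.natDegree_mul hXC hg₁
        rw [← hfac, hdeg, Polynomial.natDegree_X_sub_C] at this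
        omega
      have hroots₁ : ∀ z : ℂ, g₁.IsRoot z → z ∉ H.maxDomain := by
        intro z hz
        apply hroots
        rw [Polynomial.IsRoot, hfac, Polynomial.eval_mul, hz, mul_zero]
      have h1 := IH g₁.natDegree hdeg₁ g₁ rfl hg₁ hroots₁
      have hkey := key H w (hroots w hwroot)
      -- Step A : poly g₁ ∈ closure (range (poly (g*·)))
      have hA : H.poly g₁ ∈ closure (Set.range fun q : Polynomial ℂ => H.poly (g * q)) := by
        rw [← mul_poly_one H g₁]
        refine mem_closure_of_image (H.mul g₁).continuous ?_ hkey
        rintro _ ⟨q, rfl⟩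
        apply subset_closure
        refine ⟨q, ?_⟩
        rw [mul_poly]
        refine congrArg H.poly ?_
        rw [hfac]; ring
      -- Step B/C : range (poly (g₁*·)) ⊆ closure (range (poly (g*·)))
      have hC : ∀ q : Polynomial ℂ, H.poly (g₁ * q) ∈
          closure (Set.range fun r : Polynomial ℂ => H.poly (g * r)) := by
        intro q
        have := mem_closure_of_image (H.mul q).continuous (t :=
          Set.range fun r : Polynomial ℂ => H.poly (g * r)) ?_ hA
        · rwa [mul_poly, mul_comm q g₁] at this
        · rintro _ ⟨r, rfl⟩
          apply subset_closure
          refine ⟨q * r, ?_⟩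
          rw [mul_poly]
          refine congrArg H.poly ?_
          ring
      refine closure_minimal ?_ isClosed_closure h1
      rintro _ ⟨q, rfl⟩
      exact hC q

end HoloFunSpace1Aux

open HoloFunSpace1 in
/-- In one variable, a family of polynomials `ℱ ⊆ 𝒫_1` is jointly
cyclic if and only if `V(ℱ) ∩ Ω_max = ∅`, where `V(ℱ)` is the common vanishing set. -/
theorem jointlyCyclic_iff_vanishing_disjoint_maxDomain
    {Ω : Set ℂ} {X : Type*}
    [AddCommGroup X] [Module ℂ X] [TopologicalSpace X]
    [IsTopologicalAddGroup X] [ContinuousSMul ℂ X] [T2Space X]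
    (hΩ : IsOpen Ω) (H : HoloFunSpace1 Ω X) (ℱ : Set (Polynomial ℂ)) :
    H.JointlyCyclic (H.poly '' ℱ) ↔
      {w : ℂ | ∀ p ∈ ℱ, Polynomial.eval w p = 0} ∩ H.maxDomain = ∅ := by
  open HoloFunSpace1Aux in
  constructor
  · -- jointly cyclic → no common zero in the maximal domain
    intro hcyc
    rw [Set.eq_empty_iff_forall_notMem]
    rintro w ⟨hwV, Λ, hΛ⟩
    have hker : H.jointInvSub (H.poly '' ℱ) ⊆ {x | Λ x = 0} := by
      apply closure_minimal ?_ (isClosed_eq Λ.continuous continuous_const)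
      intro x hx
      refine Submodule.span_induction ?_ ?_ ?_ ?_ hx
      · rintro y hy
        simp only [Set.mem_iUnion] at hy
        obtain ⟨F, ⟨P, hP, rfl⟩, hy⟩ := hy
        have hsub : (Set.range fun q : Polynomial ℂ => H.mul q (H.poly P)) ⊆ {x | Λ x = 0} := by
          rintro _ ⟨q, rfl⟩
          show Λ (H.mul q (H.poly P)) = 0
          rw [mul_poly, hΛ, Polynomial.eval_mul, hwV P hP, mul_zero]
        exact closure_minimal hsub (isClosed_eq Λ.continuous continuous_const) hy
      · simp
      · intro a b _ _ ha hb
        show Λ (a + b) = 0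
        rw [map_add, ha, hb, add_zero]
      · intro c a _ ha
        show Λ (c • a) = 0
        rw [map_smul, ha, smul_zero]
    have h1 : Λ (H.poly 1) = 0 := hker (by rw [hcyc]; trivial)
    rw [hΛ, Polynomial.eval_one] at h1
    exact one_ne_zero h1
  · -- no common zero in the maximal domain → jointly cyclic
    intro hempty
    by_cases hex : ∃ P ∈ ℱ, P ≠ 0
    · obtain ⟨P, hPF, hP0⟩ := hex
      set I : Ideal (Polynomial ℂ) := Ideal.span ℱ with hI
      haveI hprin : I.IsPrincipal := IsPrincipalIdealRing.principal I
      set g : Polynomial ℂ := Submodule.IsPrincipal.generator I with hg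
      have hmemI : ∀ x : Polynomial ℂ, x ∈ I ↔ g ∣ x := fun x =>
        Submodule.IsPrincipal.mem_iff_generator_dvd I
      have hg0 : g ≠ 0 := by
        intro h
        apply hP0
        have := (hmemI P).mp (Ideal.subset_span hPF)
        rwa [h, zero_dvd_iff] at this
      have hroots : ∀ w : ℂ, g.IsRoot w → w ∉ H.maxDomain := by
        intro w hw hmax
        have hmem : w ∈ ({w : ℂ | ∀ p ∈ ℱ, Polynomial.eval w p = 0} ∩ H.maxDomain) := by
          refine ⟨?_, hmax⟩
          intro p hp
          obtain ⟨q, hq⟩ := (hmemI p).mp (Ideal.subset_span hp)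
          rw [hq, Polynomial.eval_mul, hw, zero_mul]
        rw [hempty] at hmem
        exact hmem
      have h1 := ind H g.natDegree g rfl hg0 hroots
      set spanSet : Submodule ℂ X :=
        Submodule.span ℂ (⋃ F ∈ H.poly '' ℱ, H.invSub F) with hspanSet
      have hmulspan : ∀ r : Polynomial ℂ, ∀ x ∈ spanSet, H.mul r x ∈ spanSet := by
        intro r x hx
        refine Submodule.span_induction ?_ ?_ ?_ ?_ hx
        · intro y hy
          simp only [Set.mem_iUnion] at hy
          obtain ⟨F, hF, hy⟩ := hy
          apply Submodule.subset_span
          simp only [Set.mem_iUnion]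
          refine ⟨F, hF, ?_⟩
          refine mem_closure_of_image (H.mul r).continuous ?_ hy
          rintro _ ⟨q, rfl⟩
          exact subset_closure ⟨r * q, (mul_mul H r q F).symm⟩
        · rw [map_zero]; exact Submodule.zero_mem _
        · intro a b _ _ ha hb
          rw [map_add]; exact Submodule.add_mem _ ha hb
        · intro c a _ ha
          rw [map_smul]; exact Submodule.smul_mem _ c ha
      have hIdeal : ∀ x ∈ I, H.poly x ∈ spanSet := by
        intro x hx
        refine Submodule.span_induction ?_ ?_ ?_ ?_ hx
        · intro y hy
          apply Submodule.subset_span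
          simp only [Set.mem_iUnion]
          exact ⟨H.poly y, ⟨y, hy, rfl⟩,
            subset_closure ⟨1, by show H.mul 1 (H.poly y) = H.poly y; rw [mul_poly, one_mul]⟩⟩
        · rw [map_zero]; exact Submodule.zero_mem _
        · intro a b _ _ ha hb
          rw [map_add]; exact Submodule.add_mem _ ha hb
        · intro r a _ ha
          rw [smul_eq_mul, ← mul_poly]
          exact hmulspan r _ ha
      have h2 : H.poly 1 ∈ H.jointInvSub (H.poly '' ℱ) := by
        refine closure_minimal ?_ isClosed_closure h1
        rintro _ ⟨q, rfl⟩
        refine subset_closure (hIdeal (g * q) ?_)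
        exact Ideal.mul_mem_right q I (Submodule.IsPrincipal.generator_mem I)
      have h3 : ∀ p : Polynomial ℂ, H.poly p ∈ H.jointInvSub (H.poly '' ℱ) := by
        intro p
        rw [← mul_poly_one H p]
        exact mem_closure_of_image (H.mul p).continuous
          (fun y hy => subset_closure (hmulspan p y hy)) h2
      show H.jointInvSub (H.poly '' ℱ) = Set.univ
      apply Set.eq_univ_of_univ_subset
      calc (Set.univ : Set X) = closure (Set.range fun p : Polynomial ℂ => H.poly p) :=
            H.dense_poly.closure_eq.symm
        _ ⊆ H.jointInvSub (H.poly '' ℱ) := by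
            refine closure_minimal ?_ isClosed_closure
            rintro _ ⟨p, rfl⟩
            exact h3 p
    · -- all members of ℱ are the zero polynomial
      push_neg at hex
      have hmax : H.maxDomain = ∅ := by
        rw [Set.eq_empty_iff_forall_notMem]
        intro w hw
        have hmem : w ∈ ({w : ℂ | ∀ p ∈ ℱ, Polynomial.eval w p = 0} ∩ H.maxDomain) := by
          refine ⟨?_, hw⟩
          intro p hp
          rw [hex p hp, Polynomial.eval_zero]
        rw [hempty] at hmem
        exact hmem
      have hΩe : Ω = ∅ := by
        rw [Set.eq_empty_iff_forall_notMem]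
        intro z hz
        have := omega_subset_maxDomain H hz
        rw [hmax] at this
        exact this
      haveI : Subsingleton X :=
        ⟨fun a b => H.inj a b (fun z hz => absurd (hΩe ▸ hz) (Set.notMem_empty z))⟩
      show H.jointInvSub (H.poly '' ℱ) = Set.univ
      apply Set.eq_univ_of_forall
      intro x
      have h0 : (0 : X) ∈ H.jointInvSub (H.poly '' ℱ) :=
        subset_closure (Submodule.zero_mem _)
      rwa [Subsingleton.elim x 0]
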